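/- Dememorization identity (transport equation for the auxiliary variable). Let d be a positive integer, ã ∈ ℝᵈ a constant vector, β ∈ ℝ, and let u : ℝᵈ × ℝ → ℝ be continuously differentiable. Define v : ℝᵈ × ℝ → ℝ by v(x,t) := ∫₀ᵗ e^{−β(t−s)} u(x − (t−s)ã, s) ds. Then v is differentiable in x and t, and for every x ∈ ℝᵈ and t ∈ ℝ it satisfies ∂ₜ v(x,t) + β v(x,t) + ã · ∇ₓ v(x,t) = u(x,t). -/

import Mathlib

open MeasureTheory intervalIntegral Asymptotics

open MeasureTheory intervalIntegral Asymptotics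

lemma hasFDerivAt_param_intervalIntegral
    {E : Type*} [NormedAddCommGroup E] [NormedSpace ℝ E] [ProperSpace E]
    (h : E × ℝ → ℝ) (hh : ContDiff ℝ 1 h) (x₀ : E) (t₀ : ℝ) :
    HasFDerivAt (fun p : E × ℝ => ∫ s in (0:ℝ)..p.2, h (p.1, s))
      (((∫ s in (0:ℝ)..t₀, (fderiv ℝ h (x₀, s)).comp (ContinuousLinearMap.inl ℝ E ℝ)).comp
          (ContinuousLinearMap.fst ℝ E ℝ)) + h (x₀, t₀) • (ContinuousLinearMap.snd ℝ E ℝ))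
      (x₀, t₀) := by
  have hc : Continuous h := hh.continuous
  have hD : Continuous fun p : E × ℝ => fderiv ℝ h p := hh.continuous_fderiv one_ne_zero
  have hcs : ∀ y : E, Continuous fun s : ℝ => h (y, s) := fun y =>
    hc.comp (continuous_const.prodMk continuous_id)
  have hDs : Continuous fun s : ℝ => (fderiv ℝ h (x₀, s)).comp (ContinuousLinearMap.inl ℝ E ℝ) :=
    ((hD.comp (continuous_const.prodMk continuous_id)).clm_comp continuous_const)
  have hBint : IntervalIntegrable
      (fun s : ℝ => (fderiv ℝ h (x₀, s)).comp (ContinuousLinearMap.inl ℝ E ℝ))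
      volume 0 t₀ := hDs.intervalIntegrable _ _
  refine HasFDerivAt.of_isLittleO (isLittleO_iff.mpr ?_)
  intro c hc0
  set ε := c / (1 + |t₀|) with hε
  have hεpos : 0 < ε := div_pos hc0 (by positivity)
  -- continuity of h at (x₀, t₀)
  obtain ⟨δ₁, hδ₁, Hδ₁⟩ := Metric.continuousAt_iff.mp hc.continuousAt ε hεpos
  -- uniform continuity of fderiv on compact set
  have hK : IsCompact ((Metric.closedBall x₀ 1) ×ˢ (Set.uIcc (0:ℝ) t₀)) :=
    (isCompact_closedBall x₀ 1).prod isCompact_uIcc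
  obtain ⟨δ₂, hδ₂, Hδ₂⟩ := Metric.uniformContinuousOn_iff.mp
    (hK.uniformContinuousOn_of_continuous hD.continuousOn) ε hεpos
  have hδ : 0 < min 1 (min δ₁ δ₂) := by positivity
  filter_upwards [Metric.ball_mem_nhds (x₀, t₀) hδ] with p hp
  obtain ⟨x, t⟩ := p
  have hdist : dist (x, t) (x₀, t₀) < min 1 (min δ₁ δ₂) := hp
  have hxd : dist x x₀ < min 1 (min δ₁ δ₂) := lt_of_le_of_lt (le_max_left _ _) (by
    rw [Prod.dist_eq] at hdist; exact hdist)
  have htd : dist t t₀ < min 1 (min δ₁ δ₂) := lt_of_le_of_lt (le_max_right _ _) (by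
    rw [Prod.dist_eq] at hdist; exact hdist)
  -- bound for the `t`-direction remainder
  have boundT : ∀ s ∈ Set.uIcc t₀ t, ‖h (x, s) - h (x₀, t₀)‖ ≤ ε := by
    intro s hs
    have hst : |s - t₀| ≤ |t - t₀| := by
      rw [Set.uIcc_eq_union] at hs
      rcases hs with hs | hs <;> rw [Set.mem_Icc] at hs <;> rw [abs_sub_le_iff] <;>
        constructor <;> cases' abs_sub_le_iff.mp (le_refl |t - t₀|) with h1 h2 <;> linarith
    have : dist (x, s) (x₀, t₀) < δ₁ := by
      rw [Prod.dist_eq]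
      refine max_lt (lt_of_lt_of_le hxd ?_) ?_
      · exact le_trans (min_le_right _ _) (min_le_left _ _)
      · rw [Real.dist_eq]
        calc |s - t₀| ≤ |t - t₀| := hst
          _ < δ₁ := lt_of_lt_of_le htd (le_trans (min_le_right _ _) (min_le_left _ _))
    exact le_of_lt (Hδ₁ this)
  -- bound for the `x`-direction remainder
  have boundX : ∀ s ∈ Set.uIcc (0:ℝ) t₀,
      ‖h (x, s) - h (x₀, s) - fderiv ℝ h (x₀, s) (x - x₀, 0)‖ ≤ ε * ‖x - x₀‖ := by
    intro s hs
    have key : ∀ y ∈ Metric.closedBall x₀ (dist x x₀),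
        HasFDerivWithinAt (fun y : E => h (y, s))
          ((fderiv ℝ h (y, s)).comp (ContinuousLinearMap.inl ℝ E ℝ))
          (Metric.closedBall x₀ (dist x x₀)) y := by
      intro y _
      exact (((hh.differentiable one_ne_zero) (y, s)).hasFDerivAt.comp y
        (hasFDerivAt_prodMk_left y s)).hasFDerivWithinAt
    have bnd : ∀ y ∈ Metric.closedBall x₀ (dist x x₀),
        ‖(fderiv ℝ h (y, s)).comp (ContinuousLinearMap.inl ℝ E ℝ) -
          (fderiv ℝ h (x₀, s)).comp (ContinuousLinearMap.inl ℝ E ℝ)‖ ≤ ε := by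
      intro y hy
      rw [Metric.mem_closedBall] at hy
      have hy1 : dist y x₀ ≤ 1 := le_trans hy (le_of_lt (lt_of_lt_of_le hxd (min_le_left _ _)))
      have hmem : (y, s) ∈ (Metric.closedBall x₀ 1) ×ˢ (Set.uIcc (0:ℝ) t₀) :=
        ⟨Metric.mem_closedBall.mpr hy1, hs⟩
      have hmem' : (x₀, s) ∈ (Metric.closedBall x₀ 1) ×ˢ (Set.uIcc (0:ℝ) t₀) :=
        ⟨Metric.mem_closedBall_self (by norm_num), hs⟩
      have hd2 : dist (y, s) (x₀, s) < δ₂ := by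
        rw [Prod.dist_eq]
        simp only [dist_self]
        refine max_lt ?_ hδ₂
        calc dist y x₀ ≤ dist x x₀ := hy
          _ < δ₂ := lt_of_lt_of_le hxd (le_trans (min_le_right _ _) (min_le_right _ _))
      have := Hδ₂ _ hmem _ hmem' hd2
      rw [dist_eq_norm] at this
      rw [← ContinuousLinearMap.sub_comp]
      calc ‖(fderiv ℝ h (y, s) - fderiv ℝ h (x₀, s)).comp (ContinuousLinearMap.inl ℝ E ℝ)‖
          ≤ ‖fderiv ℝ h (y, s) - fderiv ℝ h (x₀, s)‖ * ‖(ContinuousLinearMap.inl ℝ E ℝ)‖ :=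
            ContinuousLinearMap.opNorm_comp_le _ _
        _ ≤ ‖fderiv ℝ h (y, s) - fderiv ℝ h (x₀, s)‖ * 1 := by
            gcongr
            exact ContinuousLinearMap.opNorm_le_bound _ zero_le_one
              (fun z => by simp [Prod.norm_def])
        _ ≤ ε := by rw [mul_one]; exact le_of_lt this
    have := (convex_closedBall x₀ (dist x x₀)).norm_image_sub_le_of_norm_hasFDerivWithin_le'
      key bnd (Metric.mem_closedBall_self dist_nonneg) (Metric.mem_closedBall.mpr le_rfl)
    calc ‖h (x, s) - h (x₀, s) - fderiv ℝ h (x₀, s) (x - x₀, 0)‖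
        = ‖h (x, s) - h (x₀, s) -
            (fderiv ℝ h (x₀, s)).comp (ContinuousLinearMap.inl ℝ E ℝ) (x - x₀)‖ := by
          simp [ContinuousLinearMap.comp_apply]
      _ ≤ ε * ‖x - x₀‖ := this
  -- algebraic splitting
  have hint1 : IntervalIntegrable (fun s => h (x, s)) volume 0 t₀ :=
    (hcs x).intervalIntegrable _ _
  have hint1' : IntervalIntegrable (fun s => h (x, s)) volume t₀ t :=
    (hcs x).intervalIntegrable _ _
  have hint2 : IntervalIntegrable (fun s => h (x₀, s)) volume 0 t₀ :=
    (hcs x₀).intervalIntegrable _ _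
  have hint3 : IntervalIntegrable (fun s => fderiv ℝ h (x₀, s) (x - x₀, 0)) volume 0 t₀ :=
    ((hD.comp (continuous_const.prodMk continuous_id)).clm_apply continuous_const).intervalIntegrable _ _
  have split : (∫ s in (0:ℝ)..t, h (x, s)) - (∫ s in (0:ℝ)..t₀, h (x₀, s)) -
      ((((∫ s in (0:ℝ)..t₀, (fderiv ℝ h (x₀, s)).comp (ContinuousLinearMap.inl ℝ E ℝ)).comp
          (ContinuousLinearMap.fst ℝ E ℝ)) + h (x₀, t₀) • (ContinuousLinearMap.snd ℝ E ℝ))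
          ((x, t) - (x₀, t₀))) =
      (∫ s in (0:ℝ)..t₀, (h (x, s) - h (x₀, s) - fderiv ℝ h (x₀, s) (x - x₀, 0))) +
      (∫ s in t₀..t, (h (x, s) - h (x₀, t₀))) := by
    have e1 : (∫ s in (0:ℝ)..t, h (x, s)) =
        (∫ s in (0:ℝ)..t₀, h (x, s)) + (∫ s in t₀..t, h (x, s)) :=
      (integral_add_adjacent_intervals hint1 hint1').symm
    have e2 : (∫ s in t₀..t, (h (x, s) - h (x₀, t₀))) =
        (∫ s in t₀..t, h (x, s)) - (h (x₀, t₀)) * (t - t₀) := by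
      rw [integral_sub hint1' (intervalIntegrable_const)]
      simp [mul_comm]
    have e3 : (∫ s in (0:ℝ)..t₀, (h (x, s) - h (x₀, s) - fderiv ℝ h (x₀, s) (x - x₀, 0))) =
        (∫ s in (0:ℝ)..t₀, h (x, s)) - (∫ s in (0:ℝ)..t₀, h (x₀, s)) -
        (∫ s in (0:ℝ)..t₀, fderiv ℝ h (x₀, s) (x - x₀, 0)) := by
      rw [integral_sub (hint1.sub hint2) hint3, integral_sub hint1 hint2]
    have e4 : (∫ s in (0:ℝ)..t₀, (fderiv ℝ h (x₀, s)).comp (ContinuousLinearMap.inl ℝ E ℝ))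
        (x - x₀) = (∫ s in (0:ℝ)..t₀, fderiv ℝ h (x₀, s) (x - x₀, 0)) := by
      rw [ContinuousLinearMap.intervalIntegral_apply hBint]
      simp [ContinuousLinearMap.comp_apply]
    simp only [ContinuousLinearMap.add_apply, ContinuousLinearMap.comp_apply,
      ContinuousLinearMap.coe_fst', ContinuousLinearMap.smul_apply,
      ContinuousLinearMap.coe_snd', Prod.fst_sub, Prod.snd_sub, smul_eq_mul]
    rw [e1, e2, e3, e4]
    ring
  rw [split]
  -- final estimate
  have n1 : ‖∫ s in (0:ℝ)..t₀, (h (x, s) - h (x₀, s) - fderiv ℝ h (x₀, s) (x - x₀, 0))‖ ≤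
      ε * ‖x - x₀‖ * |t₀ - 0| :=
    norm_integral_le_of_norm_le_const (fun s hs => boundX s (Set.uIoc_subset_uIcc hs))
  have n2 : ‖∫ s in t₀..t, (h (x, s) - h (x₀, t₀))‖ ≤ ε * |t - t₀| := by
    have := norm_integral_le_of_norm_le_const (fun s hs => boundT s (Set.uIoc_subset_uIcc hs))
    linarith [this]
  have hxn : ‖x - x₀‖ ≤ ‖(x, t) - (x₀, t₀)‖ := by
    rw [Prod.norm_def]; exact le_max_of_le_left (by simp [Prod.fst_sub])
  have htn : |t - t₀| ≤ ‖(x, t) - (x₀, t₀)‖ := by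
    rw [Prod.norm_def]; exact le_max_of_le_right (by simp [Prod.snd_sub, Real.norm_eq_abs])
  calc ‖(∫ s in (0:ℝ)..t₀, (h (x, s) - h (x₀, s) - fderiv ℝ h (x₀, s) (x - x₀, 0))) +
      (∫ s in t₀..t, (h (x, s) - h (x₀, t₀)))‖
      ≤ ε * ‖x - x₀‖ * |t₀ - 0| + ε * |t - t₀| := le_trans (norm_add_le _ _) (by linarith)
    _ ≤ ε * ‖(x, t) - (x₀, t₀)‖ * |t₀| + ε * ‖(x, t) - (x₀, t₀)‖ := by
        rw [sub_zero]
        gcongr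
    _ = ε * (1 + |t₀|) * ‖(x, t) - (x₀, t₀)‖ := by ring
    _ = c * ‖(x, t) - (x₀, t₀)‖ := by
        rw [hε, div_mul_cancel₀]
        positivity

set_option maxHeartbeats 2000000

open RealInnerProductSpace

/-- Dememorization identity: the auxiliary variable
`v(x,t) = ∫₀ᵗ e^{-β(t-s)} u(x - (t-s)a', s) ds` satisfies the memory-free
transport–reaction equation `∂ₜv + βv + a'·∇ₓv = u`. -/
theorem dememorization_transport_identity
    (d : ℕ) (hd : 0 < d) (a' : EuclideanSpace ℝ (Fin d)) (β : ℝ)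
    (u : EuclideanSpace ℝ (Fin d) → ℝ → ℝ)
    (hu : ContDiff ℝ 1 (fun p : EuclideanSpace ℝ (Fin d) × ℝ => u p.1 p.2))
    (v : EuclideanSpace ℝ (Fin d) → ℝ → ℝ)
    (hv : ∀ x t, v x t =
      ∫ s in (0 : ℝ)..t, Real.exp (-β * (t - s)) * u (x - (t - s) • a') s) :
    (∀ x t, DifferentiableAt ℝ (fun y => v y t) x) ∧
    (∀ x t, DifferentiableAt ℝ (v x) t) ∧
    (∀ x t, deriv (v x) t + β * v x t + ⟪a', gradient (fun y => v y t) x⟫ = u x t) := by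
  set h : EuclideanSpace ℝ (Fin d) × ℝ → ℝ :=
    fun p => Real.exp (β * p.2) * u (p.1 + p.2 • a') p.2 with hh_def
  have hC : ContDiff ℝ 1 h := by
    apply ContDiff.mul
    · exact (contDiff_const.mul contDiff_snd).exp
    · exact hu.comp ((contDiff_fst.add (contDiff_snd.smul (contDiff_const (c := a')))).prodMk
        contDiff_snd)
  set w : EuclideanSpace ℝ (Fin d) × ℝ → ℝ :=
    fun p => Real.exp (-β * p.2) * ∫ s in (0:ℝ)..p.2, h (p.1 - p.2 • a', s) with hw_def
  have hvw : ∀ (x : EuclideanSpace ℝ (Fin d)) (t : ℝ), v x t = w (x, t) := by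
    intro x t
    rw [hv]
    simp only [hw_def]
    rw [← intervalIntegral.integral_const_mul]
    apply intervalIntegral.integral_congr
    intro s _
    simp only [hh_def]
    rw [← mul_assoc, ← Real.exp_add]
    have h1 : -β * t + β * s = -β * (t - s) := by ring
    have h2 : x - t • a' + s • a' = x - (t - s) • a' := by
      rw [sub_smul]; abel
    rw [h1, h2]
  set Φ : (EuclideanSpace ℝ (Fin d) × ℝ) →L[ℝ] (EuclideanSpace ℝ (Fin d) × ℝ) :=
    ((ContinuousLinearMap.fst ℝ (EuclideanSpace ℝ (Fin d)) ℝ) -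
      (ContinuousLinearMap.snd ℝ (EuclideanSpace ℝ (Fin d)) ℝ).smulRight a').prod
      (ContinuousLinearMap.snd ℝ (EuclideanSpace ℝ (Fin d)) ℝ) with hΦ_def
  have key : ∀ (x : EuclideanSpace ℝ (Fin d)) (t : ℝ), HasFDerivAt w
      (Real.exp (-β * t) •
        ((((∫ s in (0:ℝ)..t, (fderiv ℝ h (x - t • a', s)).comp
              (ContinuousLinearMap.inl ℝ (EuclideanSpace ℝ (Fin d)) ℝ)).comp
            (ContinuousLinearMap.fst ℝ (EuclideanSpace ℝ (Fin d)) ℝ)) +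
          h (x - t • a', t) • (ContinuousLinearMap.snd ℝ (EuclideanSpace ℝ (Fin d)) ℝ)).comp Φ)
        + (∫ s in (0:ℝ)..t, h (x - t • a', s)) •
            (Real.exp (-β * t) • ((-β) • ContinuousLinearMap.snd ℝ (EuclideanSpace ℝ (Fin d)) ℝ)))
      (x, t) := by
    intro x t
    have hφ : HasFDerivAt (fun p : EuclideanSpace ℝ (Fin d) × ℝ => (p.1 - p.2 • a', p.2)) Φ
        (x, t) :=
      ((hasFDerivAt_fst).sub ((hasFDerivAt_snd).smul_const a')).prodMk hasFDerivAt_snd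
    have hF := hasFDerivAt_param_intervalIntegral h hC (x - t • a') t
    have hG : HasFDerivAt
        (fun p : EuclideanSpace ℝ (Fin d) × ℝ => ∫ s in (0:ℝ)..p.2, h (p.1 - p.2 • a', s))
        ((((∫ s in (0:ℝ)..t, (fderiv ℝ h (x - t • a', s)).comp
              (ContinuousLinearMap.inl ℝ (EuclideanSpace ℝ (Fin d)) ℝ)).comp
            (ContinuousLinearMap.fst ℝ (EuclideanSpace ℝ (Fin d)) ℝ)) +
          h (x - t • a', t) • (ContinuousLinearMap.snd ℝ (EuclideanSpace ℝ (Fin d)) ℝ)).comp Φ)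
        (x, t) := by have := hF.comp (x, t) hφ; exact this
    have hexp : HasFDerivAt (fun p : EuclideanSpace ℝ (Fin d) × ℝ => Real.exp (-β * p.2))
        (Real.exp (-β * t) • ((-β) • ContinuousLinearMap.snd ℝ (EuclideanSpace ℝ (Fin d)) ℝ))
        (x, t) := by
      have h1 : HasFDerivAt (fun p : EuclideanSpace ℝ (Fin d) × ℝ => -β * p.2)
          ((-β) • ContinuousLinearMap.snd ℝ (EuclideanSpace ℝ (Fin d)) ℝ) (x, t) :=
        hasFDerivAt_snd.const_mul (-β)
      exact h1.exp
    exact hexp.mul hG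
  refine ⟨?_, ?_, ?_⟩
  · intro x t
    have h1 : (fun y => v y t) = fun y => w (y, t) := funext fun y => hvw y t
    rw [h1]
    exact ((key x t).comp x (f := fun y => (y, t)) (hasFDerivAt_prodMk_left x t)).differentiableAt
  · intro x t
    have h1 : v x = fun τ => w (x, τ) := funext fun τ => hvw x τ
    rw [h1]
    exact ((key x t).comp t (hasFDerivAt_prodMk_right x t)).differentiableAt
  · intro x t
    set W := Real.exp (-β * t) •
        ((((∫ s in (0:ℝ)..t, (fderiv ℝ h (x - t • a', s)).comp
              (ContinuousLinearMap.inl ℝ (EuclideanSpace ℝ (Fin d)) ℝ)).comp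
            (ContinuousLinearMap.fst ℝ (EuclideanSpace ℝ (Fin d)) ℝ)) +
          h (x - t • a', t) • (ContinuousLinearMap.snd ℝ (EuclideanSpace ℝ (Fin d)) ℝ)).comp Φ)
        + (∫ s in (0:ℝ)..t, h (x - t • a', s)) •
            (Real.exp (-β * t) • ((-β) • ContinuousLinearMap.snd ℝ (EuclideanSpace ℝ (Fin d)) ℝ))
      with hW_def
    -- time derivative
    have hdt : deriv (v x) t = W (0, 1) := by
      have h1 : v x = fun τ => w (x, τ) := funext fun τ => hvw x τ
      have h2 : HasFDerivAt (fun τ => w (x, τ))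
          (W.comp (ContinuousLinearMap.inr ℝ (EuclideanSpace ℝ (Fin d)) ℝ)) t :=
        (key x t).comp t (hasFDerivAt_prodMk_right x t)
      rw [h1, h2.hasDerivAt.deriv]
      simp [ContinuousLinearMap.inr_apply]
    -- gradient term
    have hgrad : ⟪a', gradient (fun y => v y t) x⟫ = W (a', 0) := by
      have h1 : (fun y => v y t) = fun y => w (y, t) := funext fun y => hvw y t
      have h2 : HasFDerivAt (fun y => w (y, t))
          (W.comp (ContinuousLinearMap.inl ℝ (EuclideanSpace ℝ (Fin d)) ℝ)) x :=
        (key x t).comp x (f := fun y => (y, t)) (hasFDerivAt_prodMk_left x t)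
      rw [h1, real_inner_comm, gradient, h2.fderiv, InnerProductSpace.toDual_symm_apply]
      simp [ContinuousLinearMap.inl_apply]
    rw [hdt, hgrad, hvw x t]
    have hsum : W (0, 1) + W (a', 0) = W (a', 1) := by
      rw [← map_add]
      norm_num
    have hΦval : Φ (a', 1) = (0, 1) := by
      simp [hΦ_def, ContinuousLinearMap.prod_apply, ContinuousLinearMap.smulRight_apply]
    have hWval : W (a', 1) = Real.exp (-β * t) * h (x - t • a', t)
        + (∫ s in (0:ℝ)..t, h (x - t • a', s)) * (Real.exp (-β * t) * (-β)) := by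
      rw [hW_def]
      simp only [ContinuousLinearMap.add_apply, ContinuousLinearMap.smul_apply,
        ContinuousLinearMap.comp_apply, hΦval, ContinuousLinearMap.coe_snd',
        smul_eq_mul]
      simp [map_zero]
    have hh_val : h (x - t • a', t) = Real.exp (β * t) * u x t := by
      simp only [hh_def]
      congr 1
      rw [sub_add_cancel]
    have : deriv (v x) t + β * v x t + ⟪a', gradient (fun y => v y t) x⟫
        = W (0,1) + β * w (x, t) + W (a', 0) := by rw [hdt, hgrad, hvw]
    calc W (0, 1) + β * w (x, t) + W (a', 0)
        = W (a', 1) + β * w (x, t) := by rw [← hsum]; ring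
      _ = u x t := by
          rw [hWval, hh_val]
          have hwx : w (x, t) = Real.exp (-β * t) * ∫ s in (0:ℝ)..t, h (x - t • a', s) := rfl
          rw [hwx, ← mul_assoc, ← Real.exp_add]
          have hz : -β * t + β * t = 0 := by ring
          rw [hz, Real.exp_zero]
          ring
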